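/- Let H_0 be a 1/2-maximal graph on m vertices with e(H_0) = 2C_0·m^{3/2}, let U be the set of vertices of degree at least C_0·D·m^{1/2} in H_0 (where D ≥ 1000), and let t be the number of edges incident to U. Then t ≤ 64·C_0·m^{3/2}/D. -/

import Mathlib

open Finset

lemma rpow_three_halves' {x : ℝ} (hx : 0 ≤ x) : x ^ ((3:ℝ)/2) = x * Real.sqrt x := by
  rw [Real.sqrt_eq_rpow]
  rw [show (3:ℝ)/2 = 1 + 1/2 by norm_num, Real.rpow_add' hx (by norm_num), Real.rpow_one]

lemma top_subset_sum {α : Type*} [DecidableEq α] (A : Finset α) (f : α → ℕ) (s : ℕ)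
    (hs : s ≤ A.card) :
    ∃ W, W ⊆ A ∧ W.card = s ∧ s * ∑ v ∈ A, f v ≤ A.card * ∑ v ∈ W, f v := by
  have hne : (A.powersetCard s).Nonempty := by
    rw [Finset.powersetCard_nonempty]
    exact hs
  obtain ⟨W, hWmem, hWmax⟩ := Finset.exists_max_image (A.powersetCard s) (fun W => ∑ v ∈ W, f v) hne
  rw [Finset.mem_powersetCard] at hWmem
  obtain ⟨hWA, hWcard⟩ := hWmem
  refine ⟨W, hWA, hWcard, ?_⟩
  rcases Nat.eq_zero_or_pos s with h0 | hpos
  · simp [h0]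
  have hWne : W.Nonempty := Finset.card_pos.mp (hWcard ▸ hpos)
  obtain ⟨v, hvW, hvmin⟩ := Finset.exists_min_image W f hWne
  have hswap : ∀ u ∈ A \ W, f u ≤ f v := by
    intro u hu
    rw [Finset.mem_sdiff] at hu
    have hnm : u ∉ W.erase v := fun h => hu.2 (Finset.mem_of_mem_erase h)
    have hW' : insert u (W.erase v) ∈ A.powersetCard s := by
      rw [Finset.mem_powersetCard]
      constructor
      · intro x hx
        rcases Finset.mem_insert.mp hx with rfl | hx
        · exact hu.1
        · exact hWA (Finset.mem_of_mem_erase hx)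
      · rw [Finset.card_insert_of_notMem hnm, Finset.card_erase_of_mem hvW, hWcard]
        omega
    have hle := hWmax _ hW'
    simp only [Finset.sum_insert hnm] at hle
    have herase : ∑ x ∈ W.erase v, f x + f v = ∑ x ∈ W, f x := Finset.sum_erase_add W f hvW
    omega
  have h1 : ∑ u ∈ A \ W, f u ≤ (A.card - s) * f v := by
    calc ∑ u ∈ A \ W, f u ≤ ∑ _u ∈ A \ W, f v := Finset.sum_le_sum hswap
    _ = (A \ W).card * f v := by rw [Finset.sum_const, smul_eq_mul]
    _ = (A.card - s) * f v := by rw [Finset.card_sdiff_of_subset hWA, hWcard]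
  have h2 : s * f v ≤ ∑ x ∈ W, f x := by
    calc s * f v = ∑ _x ∈ W, f v := by rw [Finset.sum_const, smul_eq_mul, hWcard]
    _ ≤ ∑ x ∈ W, f x := Finset.sum_le_sum (fun x hx => hvmin x hx)
  have h3 : ∑ v ∈ A, f v = ∑ x ∈ W, f x + ∑ u ∈ A \ W, f u := by
    rw [add_comm, Finset.sum_sdiff hWA]
  have h4 : (A.card - s) * (s * f v) ≤ (A.card - s) * ∑ x ∈ W, f x :=
    Nat.mul_le_mul_left _ h2
  have h5 : s * ∑ u ∈ A \ W, f u ≤ s * ((A.card - s) * f v) := Nat.mul_le_mul_left _ h1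
  have hac : s + (A.card - s) = A.card := Nat.add_sub_cancel' hs
  calc s * ∑ v ∈ A, f v = s * ∑ x ∈ W, f x + s * ∑ u ∈ A \ W, f u := by rw [h3]; ring
  _ ≤ s * ∑ x ∈ W, f x + s * ((A.card - s) * f v) := by omega
  _ = s * ∑ x ∈ W, f x + (A.card - s) * (s * f v) := by ring
  _ ≤ s * ∑ x ∈ W, f x + (A.card - s) * ∑ x ∈ W, f x := by omega
  _ = (s + (A.card - s)) * ∑ x ∈ W, f x := by ring
  _ = A.card * ∑ x ∈ W, f x := by rw [hac]

set_option maxHeartbeats 1600000 in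
/-- In a `1/2`-maximal graph `H` on `m` vertices with `2C₀·m^{3/2}` edges (the
`1/2`-maximality being used in the form: every vertex set `S` spans at most
`2C₀·|S|^{3/2}` edges), the number of edges incident to the set `U` of vertices of degree
at least `C₀·D·√m` is at most `64·C₀·m^{3/2}/D`, provided `D ≥ 1000`. -/
theorem stmt_18 {V : Type*} [Fintype V] (H : SimpleGraph V) (C₀ D : ℝ)
    (hC₀ : 0 < C₀) (hD : 1000 ≤ D)
    (hmax : ∀ S : Set V, ({e ∈ H.edgeSet | ∀ v ∈ e, v ∈ S}.ncard : ℝ) ≤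
      2 * C₀ * (S.ncard : ℝ) ^ ((3 : ℝ) / 2))
    (hE : (H.edgeSet.ncard : ℝ) = 2 * C₀ * (Fintype.card V : ℝ) ^ ((3 : ℝ) / 2)) :
    ({e ∈ H.edgeSet | ∃ v ∈ e,
        C₀ * D * Real.sqrt (Fintype.card V) ≤ ((H.neighborSet v).ncard : ℝ)}.ncard : ℝ) ≤
      64 * C₀ * (Fintype.card V : ℝ) ^ ((3 : ℝ) / 2) / D := by
  classical
  have hD0 : (0:ℝ) < D := by linarith
  set m := Fintype.card V with hm
  clear_value m
  set μ : ℝ := (m : ℝ) with hμdef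
  clear_value μ
  have hμ0 : 0 ≤ μ := by rw [hμdef]; exact Nat.cast_nonneg m
  set S := Real.sqrt μ with hSdef
  clear_value S
  set thr := C₀ * D * S with hthrdef
  clear_value thr
  have hdeg : ∀ v, (H.neighborSet v).ncard = H.degree v := by
    intro v
    rw [← SimpleGraph.card_neighborFinset_eq_degree,
      ← Set.ncard_coe_finset (H.neighborFinset v)]
    congr 1
    ext w
    simp
  set U : Finset V := Finset.univ.filter (fun v => thr ≤ ((H.neighborSet v).ncard : ℝ))
    with hUdef
  have hUmem : ∀ v, v ∈ U ↔ thr ≤ ((H.degree v : ℕ) : ℝ) := by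
    intro v
    rw [hUdef, Finset.mem_filter, hdeg v]
    simp
  set tF : Finset (Sym2 V) := H.edgeFinset.filter (fun e => ∃ v ∈ e, v ∈ U) with htFdef
  have hts : {e ∈ H.edgeSet | ∃ v ∈ e,
      thr ≤ ((H.neighborSet v).ncard : ℝ)}.ncard = tF.card := by
    rw [← Set.ncard_coe_finset]
    congr 1
    ext e
    simp only [htFdef, Finset.coe_filter, SimpleGraph.mem_edgeFinset, Set.mem_setOf_eq,
      and_congr_right_iff]
    intro _
    constructor
    · rintro ⟨v, hv, hthr⟩
      exact ⟨v, hv, by rw [hUdef]; simp [hthr]⟩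
    · rintro ⟨v, hv, hvU⟩
      rw [hUdef, Finset.mem_filter] at hvU
      exact ⟨v, hv, hvU.2⟩
  rw [hts]
  -- handle U = ∅
  rcases U.eq_empty_or_nonempty with hUe | ⟨u0, hu0⟩
  · have : tF = ∅ := by
      rw [htFdef, hUe]
      simp
    rw [this]
    simp only [Finset.card_empty, Nat.cast_zero]
    apply div_nonneg _ hD0.le
    positivity
  -- nonempty case
  have hm1 : 1 ≤ m := by rw [hm]; exact @Fintype.card_pos V _ ⟨u0⟩
  have hμ1 : (1:ℝ) ≤ μ := by rw [hμdef]; exact_mod_cast hm1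
  have hS0 : 0 < S := by rw [hSdef]; exact Real.sqrt_pos.mpr (by linarith)
  have hSS : S * S = μ := by rw [hSdef]; exact Real.mul_self_sqrt hμ0
  have hthr0 : 0 < thr := by rw [hthrdef]; positivity
  set t := tF.card with htdef
  clear_value t
  have hdegle : ∀ u ∈ U, H.degree u ≤ (tF.filter (fun e => u ∈ e)).card := by
    intro u hu
    rw [← SimpleGraph.card_neighborFinset_eq_degree]
    apply Finset.card_le_card_of_injOn (fun w => s(u,w))
    · intro w hw
      rw [Finset.mem_coe, SimpleGraph.mem_neighborFinset] at hw
      refine Finset.mem_filter.mpr ⟨?_, Sym2.mem_mk_left u w⟩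
      rw [htFdef]
      exact Finset.mem_filter.mpr ⟨SimpleGraph.mem_edgeFinset.mpr hw,
        u, Sym2.mem_mk_left u w, hu⟩
    · intro a _ b _ hab
      exact Sym2.congr_right.mp hab
  have hthrt : thr ≤ (t:ℝ) := by
    have h1 : thr ≤ (H.degree u0 : ℝ) := (hUmem u0).mp hu0
    have h2 : H.degree u0 ≤ t := by
      rw [htdef]
      exact le_trans (hdegle u0 hu0) (Finset.card_le_card (Finset.filter_subset _ _))
    calc thr ≤ (H.degree u0 : ℝ) := h1
    _ ≤ (t:ℝ) := by exact_mod_cast h2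
  have ht0 : (0:ℝ) < t := lt_of_lt_of_le hthr0 hthrt
  have hdegsum : ∑ u ∈ U, H.degree u ≤ 2 * t := by
    calc ∑ u ∈ U, H.degree u ≤ ∑ u ∈ U, (tF.filter (fun e => u ∈ e)).card :=
      Finset.sum_le_sum hdegle
    _ = ∑ e ∈ tF, (U.filter (fun u => u ∈ e)).card := by
        simp only [Finset.card_filter]
        rw [Finset.sum_comm]
    _ ≤ ∑ _e ∈ tF, 2 := by
        refine Finset.sum_le_sum (fun e _ => ?_)
        induction e using Sym2.ind with
        | _ x y =>
          have hsub : U.filter (fun u => u ∈ s(x,y)) ⊆ {x, y} := by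
            intro z hz
            rcases Sym2.mem_iff.mp (Finset.mem_filter.mp hz).2 with rfl | rfl
            · exact Finset.mem_insert_self _ _
            · exact Finset.mem_insert_of_mem (Finset.mem_singleton_self _)
          exact (Finset.card_le_card hsub).trans
            ((Finset.card_insert_le _ _).trans (by simp))
    _ = 2 * t := by rw [Finset.sum_const, smul_eq_mul, mul_comm, htdef]
  have hUthr : (U.card : ℝ) * thr ≤ 2 * (t:ℝ) := by
    have h2 : (U.card : ℝ) * thr ≤ ∑ u ∈ U, ((H.degree u : ℕ) : ℝ) := by
      have := Finset.card_nsmul_le_sum U (fun u => ((H.degree u : ℕ):ℝ)) thr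
        (fun u hu => (hUmem u).mp hu)
      rwa [nsmul_eq_mul] at this
    have h3 : ∑ u ∈ U, ((H.degree u : ℕ):ℝ) ≤ 2*(t:ℝ) := by
      have := hdegsum
      push_cast [← Nat.cast_sum]
      exact_mod_cast this
    linarith
  set d : V → ℕ := fun v => (H.neighborFinset v ∩ U).card with hddef
  set F : V → Finset (Sym2 V) := fun v => (H.neighborFinset v ∩ U).image (fun u => s(v,u))
    with hFdef
  have hFcard : ∀ v, (F v).card = d v := fun v =>
    Finset.card_image_of_injective _ (fun a b hab => Sym2.congr_right.mp hab)
  set A : Finset V := Finset.univ \ U with hAdef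
  have hAcard : A.card = m - U.card := by
    rw [hAdef, Finset.card_sdiff_of_subset (Finset.subset_univ U), Finset.card_univ, hm]
  set EinF := H.edgeFinset.filter (fun e => ∀ v ∈ e, v ∈ U) with hEindef
  have hcover : tF ⊆ EinF ∪ A.biUnion F := by
    intro e he
    rw [htFdef, Finset.mem_filter] at he
    obtain ⟨heE, u, hue, huU⟩ := he
    by_cases hall : ∀ v ∈ e, v ∈ U
    · exact Finset.mem_union_left _ (Finset.mem_filter.mpr ⟨heE, hall⟩)
    · push_neg at hall
      obtain ⟨b, hbe, hbU⟩ := hall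
      refine Finset.mem_union_right _ (Finset.mem_biUnion.mpr ⟨b, ?_, ?_⟩)
      · rw [hAdef, Finset.mem_sdiff]; exact ⟨Finset.mem_univ b, hbU⟩
      · have hune : u ≠ b := fun h => hbU (h ▸ huU)
        have heq : e = s(u,b) := (Sym2.mem_and_mem_iff hune).mp ⟨hue, hbe⟩
        have hadj : H.Adj u b := by
          rw [heq] at heE
          exact (SimpleGraph.mem_edgeFinset.mp heE)
        refine Finset.mem_image.mpr ⟨u, Finset.mem_inter.mpr
          ⟨(SimpleGraph.mem_neighborFinset _ _ _).mpr hadj.symm, huU⟩, ?_⟩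
        rw [heq, Sym2.eq_swap]
  have hsplit : t ≤ EinF.card + ∑ v ∈ A, d v := by
    calc t = tF.card := htdef
    _ ≤ (EinF ∪ A.biUnion F).card := Finset.card_le_card hcover
    _ ≤ EinF.card + (A.biUnion F).card := Finset.card_union_le _ _
    _ ≤ EinF.card + ∑ v ∈ A, d v := by
        have h1 : (A.biUnion F).card ≤ ∑ v ∈ A, (F v).card := Finset.card_biUnion_le
        have h2 : ∑ v ∈ A, (F v).card = ∑ v ∈ A, d v :=
          Finset.sum_congr rfl (fun v _ => hFcard v)
        omega
  have hWbound : ∀ W : Finset V, W ⊆ A →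
      ((EinF.card : ℝ) + ∑ v ∈ W, (d v : ℝ)) ≤
        2 * C₀ * (((U ∪ W).card : ℕ) : ℝ) ^ ((3:ℝ)/2) := by
    intro W hWA
    have hdisj : Disjoint EinF (W.biUnion F) := by
      rw [Finset.disjoint_left]
      intro e he hbe
      rw [hEindef, Finset.mem_filter] at he
      obtain ⟨v, hvW, hvF⟩ := Finset.mem_biUnion.mp hbe
      obtain ⟨u, hu, rfl⟩ := Finset.mem_image.mp hvF
      have hvU : v ∉ U := (Finset.mem_sdiff.mp (hAdef ▸ hWA hvW)).2
      exact hvU (he.2 v (Sym2.mem_mk_left v u))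
    have hpair : ∀ x ∈ W, ∀ y ∈ W, x ≠ y → Disjoint (F x) (F y) := by
      intro x hx y hy hxy
      rw [Finset.disjoint_left]
      intro e hex hey
      obtain ⟨a, ha, hea⟩ := Finset.mem_image.mp hex
      obtain ⟨b, hb, heb⟩ := Finset.mem_image.mp hey
      have heab : s(x,a) = s(y,b) := by rw [hea, heb]
      rcases Sym2.eq_iff.mp heab with ⟨h1, h2⟩ | ⟨h1, h2⟩
      · exact hxy h1
      · have hxU : x ∉ U := (Finset.mem_sdiff.mp (hAdef ▸ hWA hx)).2
        exact hxU (h1 ▸ (Finset.mem_inter.mp hb).2)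
    have hcardG : (EinF ∪ W.biUnion F).card = EinF.card + ∑ v ∈ W, d v := by
      rw [Finset.card_union_of_disjoint hdisj, Finset.card_biUnion hpair]
      exact congrArg _ (Finset.sum_congr rfl (fun v _ => hFcard v))
    have hsubG : ((EinF ∪ W.biUnion F : Finset (Sym2 V)) : Set (Sym2 V)) ⊆
        {e ∈ H.edgeSet | ∀ v ∈ e, v ∈ (↑(U ∪ W) : Set V)} := by
      intro e he
      rw [Finset.mem_coe, Finset.mem_union] at he
      rcases he with he | he
      · rw [hEindef, Finset.mem_filter] at he
        refine ⟨SimpleGraph.mem_edgeFinset.mp he.1, fun v hv => ?_⟩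
        simp only [Finset.coe_union, Set.mem_union, Finset.mem_coe]
        exact Or.inl (he.2 v hv)
      · obtain ⟨v, hvW, hvF⟩ := Finset.mem_biUnion.mp he
        obtain ⟨u, hu, rfl⟩ := Finset.mem_image.mp hvF
        obtain ⟨hadj, huU⟩ := Finset.mem_inter.mp hu
        rw [SimpleGraph.mem_neighborFinset] at hadj
        refine ⟨H.mem_edgeSet.mpr hadj, fun w hw => ?_⟩
        simp only [Finset.coe_union, Set.mem_union, Finset.mem_coe]
        rcases Sym2.mem_iff.mp hw with rfl | rfl
        · exact Or.inr hvW
        · exact Or.inl huU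
    have hbig := hmax (↑(U ∪ W))
    rw [Set.ncard_coe_finset] at hbig
    calc ((EinF.card : ℝ) + ∑ v ∈ W, (d v : ℝ))
        = (((EinF ∪ W.biUnion F).card : ℕ) : ℝ) := by rw [hcardG]; push_cast; ring
      _ = (((EinF ∪ W.biUnion F : Finset (Sym2 V)) : Set (Sym2 V)).ncard : ℝ) := by
          rw [Set.ncard_coe_finset]
      _ ≤ ({e ∈ H.edgeSet | ∀ v ∈ e, v ∈ (↑(U ∪ W) : Set V)}.ncard : ℝ) := by
          exact_mod_cast Nat.cast_le.mpr (Set.ncard_le_ncard hsubG (Set.toFinite _))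
      _ ≤ 2 * C₀ * (((U ∪ W).card : ℕ) : ℝ) ^ ((3:ℝ)/2) := hbig
  set σ : ℝ := 2 * (t:ℝ) / thr with hσdef
  clear_value σ
  have hσ0 : 0 ≤ σ := by rw [hσdef]; positivity
  have hσ2 : (2:ℝ) ≤ σ := by rw [hσdef, le_div_iff₀ hthr0]; linarith
  set s : ℕ := ⌊σ⌋₊ with hsdef
  clear_value s
  have hs_le : (s:ℝ) ≤ σ := by rw [hsdef]; exact Nat.floor_le hσ0
  have hs2 : 2 ≤ s := by rw [hsdef]; exact Nat.le_floor (by exact_mod_cast hσ2)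
  have hs0 : (0:ℝ) < s := by exact_mod_cast Nat.lt_of_lt_of_le Nat.zero_lt_two hs2
  have hUσ : (U.card : ℝ) ≤ σ := by rw [hσdef, le_div_iff₀ hthr0]; linarith
  have hUs : U.card ≤ s := by rw [hsdef]; exact Nat.le_floor hUσ
  have hedge : (t:ℝ) ≤ 2*C₀*μ^((3:ℝ)/2) := by
    rw [← hE]
    have h1 : H.edgeSet.ncard = H.edgeFinset.card := by
      rw [← Set.ncard_coe_finset, SimpleGraph.coe_edgeFinset]
    rw [h1, htdef, htFdef]
    exact_mod_cast Finset.card_filter_le _ _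
  have hμ32 : μ^((3:ℝ)/2) = μ * S := by rw [hSdef]; exact rpow_three_halves' hμ0
  have hedge' : (t:ℝ) ≤ 2*C₀*(μ*S) := by rw [← hμ32]; exact hedge
  have hσthr : σ * thr = 2 * (t:ℝ) := by
    rw [hσdef]
    field_simp
  have hσD : σ * D ≤ 4 * μ := by
    have h' : (σ * D) * thr ≤ (4 * μ) * thr := by
      calc (σ*D)*thr = σ*thr*D := by ring
      _ = 2*(t:ℝ)*D := by rw [hσthr]
      _ = (t:ℝ)*(2*D) := by ring
      _ ≤ (2*C₀*(μ*S))*(2*D) := mul_le_mul_of_nonneg_right hedge' (by linarith)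
      _ = 4*μ*(C₀*D*S) := by ring
      _ = 4*μ*thr := by rw [hthrdef]
    exact le_of_mul_le_mul_right h' hthr0
  have hsmμ : (s:ℝ) + (U.card : ℝ) ≤ μ := by
    have h2σ : (2*σ)*D ≤ μ*D := by
      have e2 : μ*1000 ≤ μ*D := mul_le_mul_of_nonneg_left hD hμ0
      linarith [hσD, hμ0, e2]
    have h2σ' : 2*σ ≤ μ := le_of_mul_le_mul_right h2σ hD0
    linarith [hs_le, hUσ]
  have hsm : s + U.card ≤ m := by
    have h := hsmμ
    rw [hμdef] at h
    exact_mod_cast h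
  have hsA : s ≤ A.card := by omega
  obtain ⟨W, hWA, hWcard, hWsum⟩ := top_subset_sum A d s hsA
  have hsm' : s ≤ m := by omega
  have hAm : A.card ≤ m := by omega
  have hkey : s * t ≤ m * (EinF.card + ∑ v ∈ W, d v) := by
    calc s * t ≤ s * (EinF.card + ∑ v ∈ A, d v) := Nat.mul_le_mul_left _ hsplit
    _ = s * EinF.card + s * ∑ v ∈ A, d v := Nat.mul_add _ _ _
    _ ≤ m * EinF.card + A.card * ∑ v ∈ W, d v :=
        Nat.add_le_add (Nat.mul_le_mul_right _ hsm') hWsum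
    _ ≤ m * EinF.card + m * ∑ v ∈ W, d v := by
        exact Nat.add_le_add_left (Nat.mul_le_mul_right _ hAm) _
    _ = m * (EinF.card + ∑ v ∈ W, d v) := (Nat.mul_add _ _ _).symm
  have hcard2s : (((U ∪ W).card : ℕ) : ℝ) ≤ 2 * (s:ℝ) := by
    have h1 : (U ∪ W).card ≤ U.card + W.card := Finset.card_union_le _ _
    have h2 : (U ∪ W).card ≤ 2 * s := by omega
    exact_mod_cast h2
  have h2s32 : (2*(s:ℝ))^((3:ℝ)/2) = 2*(s:ℝ)*Real.sqrt (2*(s:ℝ)) :=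
    rpow_three_halves' (by positivity)
  set R := Real.sqrt (2*(s:ℝ)) with hRdef
  clear_value R
  have hR0 : 0 ≤ R := by rw [hRdef]; exact Real.sqrt_nonneg _
  have hRR : R * R = 2*(s:ℝ) := by rw [hRdef]; exact Real.mul_self_sqrt (by positivity)
  have hWle : ((EinF.card : ℝ) + ∑ v ∈ W, (d v : ℝ)) ≤ 2*C₀*(2*(s:ℝ)*R) := by
    rw [← h2s32]
    refine (hWbound W hWA).trans ?_
    have h := Real.rpow_le_rpow (by positivity) hcard2s (by norm_num : (0:ℝ) ≤ 3/2)
    exact mul_le_mul_of_nonneg_left h (by positivity)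
  have hkeyR : (s:ℝ) * (t:ℝ) ≤ μ * (2*C₀*(2*(s:ℝ)*R)) := by
    have hc : ((s*t : ℕ):ℝ) ≤ ((m * (EinF.card + ∑ v ∈ W, d v) : ℕ):ℝ) :=
      Nat.cast_le.mpr hkey
    push_cast at hc
    have h0 : (0:ℝ) ≤ μ := hμ0
    calc (s:ℝ) * (t:ℝ) ≤ μ * ((EinF.card : ℝ) + ∑ v ∈ W, (d v : ℝ)) := by
          rw [hμdef]; exact_mod_cast hc
    _ ≤ μ * (2*C₀*(2*(s:ℝ)*R)) := mul_le_mul_of_nonneg_left hWle h0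
  have ht4 : (t:ℝ) ≤ 4*C₀*μ*R := by
    have h' : (s:ℝ) * (t:ℝ) ≤ (s:ℝ) * (4*C₀*μ*R) := by
      calc (s:ℝ) * (t:ℝ) ≤ μ * (2*C₀*(2*(s:ℝ)*R)) := hkeyR
      _ = (s:ℝ) * (4*C₀*μ*R) := by ring
    exact le_of_mul_le_mul_left h' hs0
  rw [hμ32, le_div_iff₀ hD0]
  -- goal : t * D ≤ 64 * C₀ * (μ * S)
  have h1sq : (t:ℝ) * (t:ℝ) ≤ (4*C₀*μ*R) * (4*C₀*μ*R) :=
    mul_self_le_mul_self (by positivity) ht4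
  have h2sq : (t:ℝ) * (t:ℝ) ≤ 32*C₀^2*μ^2*σ := by
    have e1 : (4*C₀*μ*R)*(4*C₀*μ*R) = 16*C₀^2*μ^2*(R*R) := by ring
    have e2 : 16*C₀^2*μ^2*(R*R) = 32*C₀^2*μ^2*(s:ℝ) := by rw [hRR]; ring
    have e3 : 32*C₀^2*μ^2*(s:ℝ) ≤ 32*C₀^2*μ^2*σ :=
      mul_le_mul_of_nonneg_left hs_le (by positivity)
    linarith [h1sq]
  have h3sq : (t:ℝ) * (t:ℝ) * thr ≤ 64*C₀^2*μ^2*(t:ℝ) := by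
    have := mul_le_mul_of_nonneg_right h2sq hthr0.le
    calc (t:ℝ) * (t:ℝ) * thr ≤ 32*C₀^2*μ^2*σ*thr := this
    _ = 32*C₀^2*μ^2*(σ*thr) := by ring
    _ = 64*C₀^2*μ^2*(t:ℝ) := by rw [hσthr]; ring
  have h4sq : (t:ℝ) * thr ≤ 64*C₀^2*μ^2 := by
    have h' : ((t:ℝ) * thr) * (t:ℝ) ≤ (64*C₀^2*μ^2) * (t:ℝ) := by
      calc ((t:ℝ) * thr) * (t:ℝ) = (t:ℝ) * (t:ℝ) * thr := by ring
      _ ≤ 64*C₀^2*μ^2*(t:ℝ) := h3sq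
      _ = (64*C₀^2*μ^2) * (t:ℝ) := by ring
    exact le_of_mul_le_mul_right h' ht0
  have hCS : (0:ℝ) < C₀ * S := by positivity
  have h5 : (t:ℝ) * D * (C₀ * S) ≤ 64 * C₀ * (μ * S) * (C₀ * S) := by
    calc (t:ℝ) * D * (C₀ * S) = (t:ℝ) * thr := by rw [hthrdef]; ring
    _ ≤ 64*C₀^2*μ^2 := h4sq
    _ = 64 * C₀ * (μ * S) * (C₀ * S) := by rw [← hSS]; ring
  exact le_of_mul_le_mul_right h5 hCS
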